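/- For any non-empty finite subset 𝔸 of the set D_u of double-vertex dominators of u, there exists a double-vertex dominator {v1, v2} ∈ D_u that is dominated by every dominator in 𝔸. -/

import Mathlib

/-- A nonempty directed path `p` from `a` to `b` in the graph with edge relation `E`. -/
def IsPath {V : Type*} (E : V → V → Prop) (p : List V) (a b : V) : Prop :=
  p ≠ [] ∧ p.head? = some a ∧ p.getLast? = some b ∧ p.Chain' E

/-- `A` dominates `B` with respect to `root`: every path from a vertex of `B` to `root`
contains a vertex of `A`. -/
def Dominates {V : Type*} (E : V → V → Prop) (root : V) (A B : Set V) : Prop :=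
  ∀ b ∈ B, ∀ p : List V, IsPath E p b root → ∃ a ∈ A, a ∈ p

/-- `A` is a dominator of `B`: it dominates `B` and no proper subset `A \ {v}` does. -/
def IsDominator {V : Type*} (E : V → V → Prop) (root : V) (A B : Set V) : Prop :=
  Dominates E root A B ∧ ∀ v ∈ A, ¬ Dominates E root (A \ {v}) B

/-- `{v, w}` is a double-vertex dominator of `u`. -/
def DoubleDom {V : Type*} (E : V → V → Prop) (root : V) (u v w : V) : Prop :=
  v ≠ w ∧ Dominates E root {v, w} {u} ∧
    ¬ Dominates E root {v} {u} ∧ ¬ Dominates E root {w} {u}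

/-- The edge relation `E` is acyclic. -/
def Acyclic {V : Type*} (E : V → V → Prop) : Prop :=
  ∀ a b, E a b → ¬ Relation.ReflTransGen E b a

section Aux

variable {V : Type*} {E : V → V → Prop} {root : V}

lemma mem_of_isPath_head {p : List V} {a b : V} (h : IsPath E p a b) : a ∈ p := by
  obtain ⟨hne, hh, -, -⟩ := h
  cases p with
  | nil => simp at hh
  | cons x xs =>
    simp only [List.head?_cons, Option.some.injEq] at hh
    subst hh
    exact List.mem_cons_self

lemma dominates_self (E : V → V → Prop) (root : V) (X : Set V) : Dominates E root X X :=
  fun b hb p hp => ⟨b, hb, mem_of_isPath_head hp⟩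

lemma getLast?_cons_ne_nil' {α : Type*} {x : α} {xs : List α} (h : xs ≠ []) :
    (x :: xs).getLast? = xs.getLast? := by
  cases xs with
  | nil => exact absurd rfl h
  | cons y ys => rw [List.getLast?_cons_cons]

lemma mem_of_getLast?_eq_some' {α : Type*} :
    ∀ {p : List α} {r : α}, p.getLast? = some r → r ∈ p := by
  intro p
  induction p with
  | nil => intro r h; simp at h
  | cons x xs ih =>
    intro r h
    cases xs with
    | nil =>
      simp only [List.getLast?_singleton, Option.some.injEq] at h
      subst h; exact List.mem_cons_self
    | cons y ys =>
      rw [List.getLast?_cons_cons] at h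
      exact List.mem_cons_of_mem _ (ih h)

lemma isPath_suffix {a : V} :
    ∀ p : List V, p.Chain' E → p.getLast? = some root → a ∈ p →
      ∃ q : List V, IsPath E q a root ∧ ∀ x ∈ q, x ∈ p := by
  intro p
  induction p with
  | nil => intro _ _ h; simp at h
  | cons x xs ih =>
    intro hc hl hm
    rcases eq_or_ne a x with rfl | hax
    · exact ⟨a :: xs, ⟨by simp, by simp, hl, hc⟩, fun y hy => hy⟩
    · have hm' : a ∈ xs := by
        rcases List.mem_cons.1 hm with rfl | h
        · exact absurd rfl hax
        · exact h
      have hxs : xs ≠ [] := by rintro rfl; simp at hm'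
      have hl' : xs.getLast? = some root := by
        rwa [getLast?_cons_ne_nil' hxs] at hl
      obtain ⟨q, hq, hsub⟩ := ih hc.tail hl' hm'
      exact ⟨q, hq, fun y hy => List.mem_cons_of_mem _ (hsub y hy)⟩

lemma dominates_trans {X Y Z : Set V}
    (h1 : Dominates E root X Y) (h2 : Dominates E root Y Z) :
    Dominates E root X Z := by
  intro b hb p hp
  obtain ⟨y, hy, hyp⟩ := h2 b hb p hp
  obtain ⟨q, hq, hsub⟩ := isPath_suffix p hp.2.2.2 hp.2.2.1 hyp
  obtain ⟨a, ha, hap⟩ := h1 y hy q hq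
  exact ⟨a, ha, hsub a hap⟩

lemma first_crossing {C : V → Prop} :
    ∀ p : List V, p.Chain' E → ∀ a, p.head? = some a → ¬ C a →
      ∀ r, p.getLast? = some r → C r →
      ∃ z ∈ p, ¬ C z ∧ ∃ y, E z y ∧ C y := by
  classical
  intro p
  induction p with
  | nil => intro _ a h; simp at h
  | cons x xs ih =>
    intro hc a ha hCa r hr hCr
    simp only [List.head?_cons, Option.some.injEq] at ha
    subst ha
    cases xs with
    | nil =>
      simp only [List.getLast?_singleton, Option.some.injEq] at hr
      subst hr; exact absurd hCr hCa
    | cons x' xs' =>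
      have hE : E x x' := (List.isChain_cons_cons.1 hc).1
      have hc' : (x' :: xs').Chain' E := (List.isChain_cons_cons.1 hc).2
      by_cases hx' : C x'
      · exact ⟨x, List.mem_cons_self, hCa, x', hE, hx'⟩
      · have hr' : (x' :: xs').getLast? = some r := by
          rwa [List.getLast?_cons_cons] at hr
        obtain ⟨z, hz, hCz, y, hEy, hCy⟩ := ih hc' x' rfl hx' r hr' hCr
        exact ⟨z, List.mem_cons_of_mem _ hz, hCz, y, hEy, hCy⟩

/-- A vertex can escape `X` if it has a path to the root avoiding `X`. -/
def Esc (E : V → V → Prop) (root : V) (X : Set V) (z : V) : Prop :=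
  ∃ p : List V, IsPath E p z root ∧ ∀ x ∈ p, x ∉ X

lemma dominates_singleton_of_not_esc {X : Set V} {z : V} (h : ¬ Esc E root X z) :
    Dominates E root X {z} := by
  intro b hb p hp
  rcases hb with rfl
  by_contra hcon
  push_neg at hcon
  exact h ⟨p, hp, fun x hx hxX => hcon x hxX hx⟩

/-- Key lemma: the "meet" of two double dominators. -/
lemma doubleDom_meet {u v w c d : V}
    (hP : DoubleDom E root u v w) (hQ : DoubleDom E root u c d) :
    ∃ a b, DoubleDom E root u a b ∧
      Dominates E root {v, w} {a, b} ∧ Dominates E root {c, d} {a, b} := by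
  classical
  obtain ⟨hvw, hPdom, hnv, hnw⟩ := hP
  obtain ⟨hcd, hQdom, hnc, hnd⟩ := hQ
  by_cases h1 : Dominates E root ({c, d} : Set V) ({v, w} : Set V)
  · exact ⟨v, w, ⟨hvw, hPdom, hnv, hnw⟩, dominates_self E root _, h1⟩
  by_cases h2 : Dominates E root ({v, w} : Set V) ({c, d} : Set V)
  · exact ⟨c, d, ⟨hcd, hQdom, hnc, hnd⟩, h2, dominates_self E root _⟩
  -- root is not in either pair
  have hroot : ∀ x : V, ¬ Dominates E root {x} {u} → root ≠ x := by
    intro x hx hrx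
    apply hx
    intro b hb p hp
    refine ⟨x, rfl, ?_⟩
    have : root ∈ p := by
      have := hp.2.2.1
      exact mem_of_getLast?_eq_some' this
    rwa [hrx] at this
  have hrootv := hroot v hnv
  have hrootw := hroot w hnw
  have hrootc := hroot c hnc
  have hrootd := hroot d hnd
  have hEscRootP : Esc E root ({v, w} : Set V) root :=
    ⟨[root], ⟨by simp, by simp, by simp, List.isChain_singleton _⟩, by
      intro x hx; simp only [List.mem_singleton] at hx; subst hx
      simp only [Set.mem_insert_iff, Set.mem_singleton_iff]
      push_neg
      exact ⟨hrootv, hrootw⟩⟩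
  have hEscRootQ : Esc E root ({c, d} : Set V) root :=
    ⟨[root], ⟨by simp, by simp, by simp, List.isChain_singleton _⟩, by
      intro x hx; simp only [List.mem_singleton] at hx; subst hx
      simp only [Set.mem_insert_iff, Set.mem_singleton_iff]
      push_neg
      exact ⟨hrootc, hrootd⟩⟩
  -- u cannot escape either pair
  have hnEscU : ∀ (X : Set V), Dominates E root X {u} → ¬ Esc E root X u := by
    rintro X hX ⟨p, hp, hfree⟩
    obtain ⟨a, haX, hap⟩ := hX u rfl p hp
    exact hfree a hap haX
  -- the set S of candidate meet vertices
  set InS : V → Prop := fun z =>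
    (z ∈ ({v, w} : Set V) ∨ z ∈ ({c, d} : Set V)) ∧
      ¬ Esc E root ({v, w} : Set V) z ∧ ¬ Esc E root ({c, d} : Set V) z with hInS
  -- every u-root path contains a vertex of S
  have hSdom : ∀ p : List V, IsPath E p u root → ∃ z ∈ p, InS z := by
    intro p hp
    obtain ⟨z, hzp, hCz, y, hEy, hCy⟩ := first_crossing (C := fun z =>
        Esc E root ({v, w} : Set V) z ∨ Esc E root ({c, d} : Set V) z)
      p hp.2.2.2 u hp.2.1
      (by
        rintro (h | h)
        · exact hnEscU _ hPdom h
        · exact hnEscU _ hQdom h)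
      root hp.2.2.1 (Or.inl hEscRootP)
    push_neg at hCz
    refine ⟨z, hzp, ?_, hCz.1, hCz.2⟩
    -- z is in P ∪ Q
    rcases hCy with ⟨r, hr, hfree⟩ | ⟨r, hr, hfree⟩
    · left
      by_contra hzP
      apply hCz.1
      refine ⟨z :: r, ⟨by simp, by simp, ?_, ?_⟩, ?_⟩
      · rw [getLast?_cons_ne_nil' hr.1]; exact hr.2.2.1
      · apply List.isChain_cons.2
        refine ⟨?_, hr.2.2.2⟩
        intro b hb
        rw [hr.2.1] at hb
        simp only [Option.mem_def, Option.some.injEq] at hb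
        subst hb; exact hEy
      · intro x hx
        rcases List.mem_cons.1 hx with rfl | hx
        · exact hzP
        · exact hfree x hx
    · right
      by_contra hzQ
      apply hCz.2
      refine ⟨z :: r, ⟨by simp, by simp, ?_, ?_⟩, ?_⟩
      · rw [getLast?_cons_ne_nil' hr.1]; exact hr.2.2.1
      · apply List.isChain_cons.2
        refine ⟨?_, hr.2.2.2⟩
        intro b hb
        rw [hr.2.1] at hb
        simp only [Option.mem_def, Option.some.injEq] at hb
        subst hb; exact hEy
      · intro x hx
        rcases List.mem_cons.1 hx with rfl | hx
        · exact hzQ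
        · exact hfree x hx
  -- not both v and w are in S (else Q would dominate P)
  have hnotbothP : ¬ (InS v ∧ InS w) := by
    rintro ⟨h1', h2'⟩
    apply h1
    intro b hb p hp
    by_contra hcon
    push_neg at hcon
    have hesc : Esc E root ({c, d} : Set V) b :=
      ⟨p, hp, fun x hx hxQ => hcon x hxQ hx⟩
    rcases hb with rfl | hb
    · exact h1'.2.2 hesc
    · rcases hb with rfl
      exact h2'.2.2 hesc
  have hnotbothQ : ¬ (InS c ∧ InS d) := by
    rintro ⟨h1', h2'⟩
    apply h2
    intro b hb p hp
    by_contra hcon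
    push_neg at hcon
    have hesc : Esc E root ({v, w} : Set V) b :=
      ⟨p, hp, fun x hx hxP => hcon x hxP hx⟩
    rcases hb with rfl | hb
    · exact h1'.2.1 hesc
    · rcases hb with rfl
      exact h2'.2.1 hesc
  -- at most one element of S in P, at most one in Q
  have huniqP : ∀ a b, InS a → InS b → a ∈ ({v, w} : Set V) → b ∈ ({v, w} : Set V) →
      a = b := by
    intro a b ha hb haP hbP
    rcases haP with rfl | haP
    · rcases hbP with rfl | hbP
      · rfl
      · rcases hbP with rfl; exact absurd ⟨ha, hb⟩ hnotbothP
    · rcases haP with rfl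
      rcases hbP with rfl | hbP
      · exact absurd ⟨hb, ha⟩ hnotbothP
      · rcases hbP with rfl; rfl
  have huniqQ : ∀ a b, InS a → InS b → a ∈ ({c, d} : Set V) → b ∈ ({c, d} : Set V) →
      a = b := by
    intro a b ha hb haQ hbQ
    rcases haQ with rfl | haQ
    · rcases hbQ with rfl | hbQ
      · rfl
      · rcases hbQ with rfl; exact absurd ⟨ha, hb⟩ hnotbothQ
    · rcases haQ with rfl
      rcases hbQ with rfl | hbQ
      · exact absurd ⟨hb, ha⟩ hnotbothQ
      · rcases hbQ with rfl; rfl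
  -- singletons from P ∪ Q do not dominate u
  have hsingle : ∀ z, InS z → ¬ Dominates E root {z} {u} := by
    intro z hz
    rcases hz.1 with (rfl | hz') | (rfl | hz')
    · exact hnv
    · rcases hz' with rfl; exact hnw
    · exact hnc
    · rcases hz' with rfl; exact hnd
  -- get a first element z1 of S
  have hnv' := hnv
  rw [Dominates] at hnv'
  push_neg at hnv'
  obtain ⟨b0, hb0, p0, hp0, -⟩ := hnv'
  rcases hb0 with rfl
  obtain ⟨z1, -, hz1⟩ := hSdom p0 hp0
  -- get a second, distinct element z2 of S
  have hz1n := hsingle z1 hz1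
  rw [Dominates] at hz1n
  push_neg at hz1n
  obtain ⟨b1, hb1, p1, hp1, hp1free⟩ := hz1n
  rcases hb1 with rfl
  obtain ⟨z2, hz2p, hz2⟩ := hSdom p1 hp1
  have hz12 : z1 ≠ z2 := by
    rintro rfl
    exact hp1free z1 rfl hz2p
  -- every element of S is z1 or z2
  have hSsub : ∀ z, InS z → z = z1 ∨ z = z2 := by
    intro z hz
    rcases hz.1 with hzP | hzQ
    · rcases hz1.1 with h | h
      · exact Or.inl (huniqP z z1 hz hz1 hzP h)
      · rcases hz2.1 with h' | h'
        · exact Or.inr (huniqP z z2 hz hz2 hzP h')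
        · exact absurd (huniqQ z1 z2 hz1 hz2 h h') hz12
    · rcases hz1.1 with h | h
      · rcases hz2.1 with h' | h'
        · exact absurd (huniqP z1 z2 hz1 hz2 h h') hz12
        · exact Or.inr (huniqQ z z2 hz hz2 hzQ h')
      · exact Or.inl (huniqQ z z1 hz hz1 hzQ h)
  refine ⟨z1, z2, ⟨hz12, ?_, hsingle z1 hz1, hsingle z2 hz2⟩, ?_, ?_⟩
  · -- {z1, z2} dominates u
    intro b hb p hp
    rcases hb with rfl
    obtain ⟨z, hzp, hz⟩ := hSdom p hp
    rcases hSsub z hz with rfl | rfl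
    · exact ⟨z, Or.inl rfl, hzp⟩
    · exact ⟨z, Or.inr rfl, hzp⟩
  · -- P dominates {z1, z2}
    intro b hb p hp
    have hb' : ¬ Esc E root ({v, w} : Set V) b := by
      rcases hb with rfl | hb
      · exact hz1.2.1
      · rcases hb with rfl; exact hz2.2.1
    by_contra hcon
    push_neg at hcon
    exact hb' ⟨p, hp, fun x hx hxP => hcon x hxP hx⟩
  · -- Q dominates {z1, z2}
    intro b hb p hp
    have hb' : ¬ Esc E root ({c, d} : Set V) b := by
      rcases hb with rfl | hb
      · exact hz1.2.2
      · rcases hb with rfl; exact hz2.2.2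
    by_contra hcon
    push_neg at hcon
    exact hb' ⟨p, hp, fun x hx hxQ => hcon x hxQ hx⟩

end Aux

theorem doubleDom_common_lower_bound {V : Type*} [Fintype V] [DecidableEq V]
    (E : V → V → Prop) (root : V) (hacyc : Acyclic E) (u : V)
    (A : Finset (V × V)) (hne : A.Nonempty)
    (hA : ∀ p ∈ A, DoubleDom E root u p.1 p.2) :
    ∃ v₁ v₂, DoubleDom E root u v₁ v₂ ∧
      ∀ p ∈ A, Dominates E root {p.1, p.2} {v₁, v₂} := by
  classical
  clear hacyc
  revert hne hA
  induction A using Finset.induction_on with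
  | empty => intro h _; simp at h
  | @insert q B hqB ih =>
    intro _ hA
    rcases B.eq_empty_or_nonempty with rfl | hB
    · refine ⟨q.1, q.2, hA q (by simp), ?_⟩
      intro p hp
      have hpq : p = q := by simpa using hp
      subst hpq
      exact dominates_self E root _
    · obtain ⟨v₁, v₂, hdd, hdom⟩ := ih hB fun p hp => hA p (Finset.mem_insert_of_mem hp)
      obtain ⟨a, b, hab, hd1, hd2⟩ :=
        doubleDom_meet hdd (hA q (Finset.mem_insert_self _ _))
      refine ⟨a, b, hab, ?_⟩
      intro p hp
      rcases Finset.mem_insert.1 hp with rfl | hp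
      · exact hd2
      · exact dominates_trans (hdom p hp) hd1
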